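/- Given five lattice points v1,...,v5 in Z^2 such that no three of them are collinear, there exists a lattice point in the convex hull of {v1,...,v5} that is not one of the five points themselves. -/
import Mathlib

/-- Embedding of lattice points of `ℤ²` into the real plane. -/
def toR (p : ℤ × ℤ) : ℝ × ℝ := ((p.1 : ℝ), (p.2 : ℝ))

lemma toR_inj : Function.Injective toR := by
  intro a b h
  have h1 := congrArg Prod.fst h
  have h2 := congrArg Prod.snd h
  simp [toR] at h1 h2
  exact Prod.ext h1 h2

lemma mid_eq (a b : ℤ × ℤ) (c1 c2 : ℤ) (h1 : a.1 + b.1 = 2 * c1) (h2 : a.2 + b.2 = 2 * c2) :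
    toR (c1, c2) = midpoint ℝ (toR a) (toR b) := by
  have hm : midpoint ℝ (toR a) (toR b) = (2:ℝ)⁻¹ • (toR a + toR b) := by
    rw [midpoint_eq_smul_add]; norm_num
  apply Prod.ext
  · rw [hm]
    simp [toR, Prod.smul_def]
    have : (a.1 : ℝ) + b.1 = 2 * c1 := by exact_mod_cast congrArg Int.cast h1
    rw [this]; ring
  · rw [hm]
    simp [toR, Prod.smul_def]
    have : (a.2 : ℝ) + b.2 = 2 * c2 := by exact_mod_cast congrArg Int.cast h2
    rw [this]; ring

theorem stmt0 (v : Fin 5 → ℤ × ℤ)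
    (hcol : ∀ i j k : Fin 5, i ≠ j → j ≠ k → i ≠ k →
      ¬ Collinear ℝ ({toR (v i), toR (v j), toR (v k)} : Set (ℝ × ℝ))) :
    ∃ w : ℤ × ℤ, toR w ∈ convexHull ℝ (Set.range (toR ∘ v)) ∧ ∀ i, w ≠ v i := by
  -- pigeonhole on parity
  obtain ⟨i, j, hij, hf⟩ : ∃ i j : Fin 5, i ≠ j ∧
      ((((v i).1 : ZMod 2), ((v i).2 : ZMod 2)) = (((v j).1 : ZMod 2), ((v j).2 : ZMod 2))) := by
    have := Fintype.exists_ne_map_eq_of_card_lt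
      (fun i : Fin 5 => ((((v i).1 : ZMod 2), ((v i).2 : ZMod 2)))) (by simp)
    obtain ⟨i, j, hij, h⟩ := this
    exact ⟨i, j, hij, h⟩
  obtain ⟨c1, hc1⟩ : ∃ c, (v i).1 + (v j).1 = 2 * c := by
    have : ((v i).1 : ZMod 2) = ((v j).1 : ZMod 2) := congrArg Prod.fst hf
    have hd : (2:ℤ) ∣ (v j).1 - (v i).1 := by
      exact_mod_cast ((ZMod.intCast_eq_intCast_iff _ _ _).mp this).dvd
    obtain ⟨c, hc⟩ := hd
    exact ⟨c + (v i).1, by linarith⟩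
  obtain ⟨c2, hc2⟩ : ∃ c, (v i).2 + (v j).2 = 2 * c := by
    have : ((v i).2 : ZMod 2) = ((v j).2 : ZMod 2) := congrArg Prod.snd hf
    have hd : (2:ℤ) ∣ (v j).2 - (v i).2 := by
      exact_mod_cast ((ZMod.intCast_eq_intCast_iff _ _ _).mp this).dvd
    obtain ⟨c, hc⟩ := hd
    exact ⟨c + (v i).2, by linarith⟩
  have hm : toR (c1, c2) = midpoint ℝ (toR (v i)) (toR (v j)) := mid_eq _ _ _ _ hc1 hc2
  refine ⟨(c1, c2), ?_, ?_⟩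
  · rw [hm]
    exact segment_subset_convexHull (s := Set.range (toR ∘ v)) (x := toR (v i)) (y := toR (v j))
      ⟨i, rfl⟩ ⟨j, rfl⟩ (midpoint_mem_segment _ _)
  · intro k hk
    have hvij : v i ≠ v j := by
      intro he
      have hall : ∀ a b : Fin 5, ∃ k' : Fin 5, k' ≠ a ∧ k' ≠ b := by decide
      obtain ⟨k', hk'i, hk'j⟩ := hall i j
      refine hcol i j k' hij (fun h => hk'j h.symm) (fun h => hk'i h.symm) ?_
      rw [he]
      have hset : ({toR (v j), toR (v j), toR (v k')} : Set (ℝ × ℝ))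
          = {toR (v j), toR (v k')} := by simp
      rw [hset]
      exact collinear_pair ℝ _ _
    have hki : k ≠ i := by
      intro he
      have h' : toR (v i) = midpoint ℝ (toR (v i)) (toR (v j)) :=
        (congrArg toR (he ▸ hk)).symm.trans hm
      exact hvij (toR_inj ((left_eq_midpoint_iff (R := ℝ)).mp h'))
    have hkj : k ≠ j := by
      intro he
      have h' : toR (v j) = midpoint ℝ (toR (v i)) (toR (v j)) :=
        (congrArg toR (he ▸ hk)).symm.trans hm
      exact hvij (toR_inj ((right_eq_midpoint_iff (R := ℝ)).mp h'))
    have hmid : toR (v k) ∈ affineSpan ℝ ({toR (v i), toR (v j)} : Set (ℝ × ℝ)) := by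
      rw [← hk, hm, midpoint]
      exact AffineMap.lineMap_mem_affineSpan_pair _ _ _
    have hcoll : Collinear ℝ ({toR (v k), toR (v i), toR (v j)} : Set (ℝ × ℝ)) :=
      collinear_insert_of_mem_affineSpan_pair hmid
    have hset : ({toR (v i), toR (v j), toR (v k)} : Set (ℝ × ℝ))
        = {toR (v k), toR (v i), toR (v j)} := by
      ext x; simp; tauto
    exact hcol i j k hij (fun h => hkj h.symm) (fun h => hki h.symm) (hset ▸ hcoll)
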